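/- Let f be a deep linear CNN of depth d with n channels and Flatten readout. Then for every input x, f(x) = (k_w k_h)^{-d/2} Σ_{(a_1,b_1),…,(a_d,b_d)} f_{(a_1,b_1),…,(a_d,b_d)}(x), where the sum runs over all d-tuples of filter offsets with 1 ≤ a_ℓ ≤ k_w, 1 ≤ b_ℓ ≤ k_h, and f_{(a_1,b_1),…,(a_d,b_d)}(x) = (W H n)^{-1/2} (n^{d-1} c)^{-1/2} Σ_{r,s} v_{r,s}^T W^{(d)}_{a_d,b_d} ⋯ W^{(2)}_{a_2,b_2} W^{(1)}_{a_1,b_1} x_{r+a_1+⋯+a_d, s+b_1+⋯+b_d} (spatial indices modulo W and H). In particular, each summand is a deep linear fully-connected-type map in the filter slice matrices W^{(ℓ)}_{a,b}, which are mutually independent Gaussian matrices, it uses exactly one slice per layer, and distinct summands may share slices. -/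

import Mathlib

open MeasureTheory ProbabilityTheory
open Fin.NatCast

namespace DeepLinearCNN

/-- Convolutional parameters of a depth-`d` linear CNN with `n` channels on inputs with `c`
channels: the first-layer filter `W^(1)_{a,b} : n×c` and the higher-layer filters
`W^(2), …, W^(d)`, each `n×n`. -/
abbrev ConvParam (kw kh c n d : ℕ) : Type :=
  (Fin kw × Fin kh × Fin n × Fin c) ⊕ (Fin (d - 1) × Fin kw × Fin kh × Fin n × Fin n)

/-- Full parameter index type: readout parameters of type `R` together with the
convolutional filters. -/
abbrev Param (R : Type) (kw kh c n d : ℕ) : Type := R ⊕ ConvParam kw kh c n d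

/-- The activations of the deep linear CNN: `acts … θ x ℓ` is `α^{(ℓ+1)}`, with
`α^{(ℓ+1)}_{r,s} = (kw kh n_ℓ)^{-1/2} Σ_{a,b} W^{(ℓ+1)}_{a,b} α^{(ℓ)}_{r+a,s+b}` and
`α^{(0)} = x`; spatial indices are taken modulo `Wd`, `Ht` (periodic padding). -/
noncomputable def acts (Wd Ht kw kh c n d : ℕ) [NeZero Wd] [NeZero Ht] {R : Type}
    (θ : Param R kw kh c n d → ℝ) (x : Fin Wd → Fin Ht → Fin c → ℝ) :
    ℕ → Fin Wd → Fin Ht → Fin n → ℝ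
  | 0 => fun r s i =>
      (Real.sqrt ((kw : ℝ) * (kh : ℝ) * (c : ℝ)))⁻¹ *
        ∑ a : Fin kw, ∑ b : Fin kh, ∑ j : Fin c,
          θ (.inr (.inl (a, b, i, j))) *
            x (r + (((a : ℕ) + 1 : ℕ) : Fin Wd)) (s + (((b : ℕ) + 1 : ℕ) : Fin Ht)) j
  | ℓ + 1 => fun r s i =>
      (Real.sqrt ((kw : ℝ) * (kh : ℝ) * (n : ℝ)))⁻¹ *
        ∑ a : Fin kw, ∑ b : Fin kh, ∑ j : Fin n,
          (if h : ℓ < d - 1 then θ (.inr (.inr (⟨ℓ, h⟩, a, b, i, j))) else 0) *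
            acts Wd Ht kw kh c n d θ x ℓ
              (r + (((a : ℕ) + 1 : ℕ) : Fin Wd)) (s + (((b : ℕ) + 1 : ℕ) : Fin Ht)) j

/-- The depth-`d` deep linear CNN with Flatten readout,
`f(x) = (Wd Ht n)^{-1/2} Σ_{r,s} v_{r,s} ⬝ α^{(d)}_{r,s}`. -/
noncomputable def netFlatten (Wd Ht kw kh c n d : ℕ) [NeZero Wd] [NeZero Ht]
    (θ : Param (Fin Wd × Fin Ht × Fin n) kw kh c n d → ℝ)
    (x : Fin Wd → Fin Ht → Fin c → ℝ) : ℝ :=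
  (Real.sqrt ((Wd : ℝ) * (Ht : ℝ) * (n : ℝ)))⁻¹ *
    ∑ r : Fin Wd, ∑ s : Fin Ht, ∑ i : Fin n,
      θ (.inl (r, s, i)) * acts Wd Ht kw kh c n d θ x (d - 1) r s i

/-- The depth-`d` deep linear CNN with global average pooling readout,
`f(x) = (Wd Ht)^{-1} n^{-1/2} Σ_{r,s} v ⬝ α^{(d)}_{r,s}`. -/
noncomputable def netGAP (Wd Ht kw kh c n d : ℕ) [NeZero Wd] [NeZero Ht]
    (θ : Param (Fin n) kw kh c n d → ℝ)
    (x : Fin Wd → Fin Ht → Fin c → ℝ) : ℝ :=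
  ((Wd : ℝ) * (Ht : ℝ))⁻¹ * (Real.sqrt (n : ℝ))⁻¹ *
    ∑ r : Fin Wd, ∑ s : Fin Ht, ∑ i : Fin n,
      θ (.inl i) * acts Wd Ht kw kh c n d θ x (d - 1) r s i

/-- The matrix chain `W^(d)_{A d} ⋯ W^(2)_{A 2} W^(1)_{A 1}` of filter slices determined by
the offsets `A`, applied to the channel vector `xvec`: `chain … t` is the result after
`t + 1` matrices. -/
noncomputable def chain (Wd Ht kw kh c n d : ℕ) (hd : 0 < d)
    (A : Fin d → Fin kw × Fin kh)
    (θ : Param (Fin Wd × Fin Ht × Fin n) kw kh c n d → ℝ) (xvec : Fin c → ℝ) :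
    ℕ → Fin n → ℝ
  | 0 => fun i =>
      ∑ j : Fin c, θ (.inr (.inl ((A ⟨0, hd⟩).1, (A ⟨0, hd⟩).2, i, j))) * xvec j
  | t + 1 => fun i => ∑ j : Fin n,
      (if h : t < d - 1 then
        θ (.inr (.inr (⟨t, h⟩, (A ⟨t + 1, by omega⟩).1, (A ⟨t + 1, by omega⟩).2, i, j)))
      else 0) * chain Wd Ht kw kh c n d hd A θ xvec t j

/-- The fully-connected-type summand
`f_{(a₁,b₁),…,(a_d,b_d)}(x) = (Wd Ht n)^{-1/2} (n^{d-1} c)^{-1/2}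
  Σ_{r,s} v_{r,s}ᵀ W^(d)_{a_d,b_d} ⋯ W^(1)_{a_1,b_1} x_{r+a₁+⋯+a_d, s+b₁+⋯+b_d}`
determined by the choice of one filter offset `A ℓ` per layer. -/
noncomputable def summand (Wd Ht kw kh c n d : ℕ) [NeZero Wd] [NeZero Ht] (hd : 0 < d)
    (A : Fin d → Fin kw × Fin kh)
    (θ : Param (Fin Wd × Fin Ht × Fin n) kw kh c n d → ℝ)
    (x : Fin Wd → Fin Ht → Fin c → ℝ) : ℝ :=
  (Real.sqrt ((Wd : ℝ) * (Ht : ℝ) * (n : ℝ)))⁻¹ *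
    (Real.sqrt ((n : ℝ) ^ (d - 1) * (c : ℝ)))⁻¹ *
    ∑ r : Fin Wd, ∑ s : Fin Ht, ∑ i : Fin n,
      θ (.inl (r, s, i)) *
        chain Wd Ht kw kh c n d hd A θ
          (fun j => x (r + ∑ ℓ : Fin d, ((((A ℓ).1 : ℕ) + 1 : ℕ) : Fin Wd))
                      (s + ∑ ℓ : Fin d, ((((A ℓ).2 : ℕ) + 1 : ℕ) : Fin Ht)) j)
          (d - 1) i


/-- Extend a tuple of offsets on `Fin (ℓ+1)` to `Fin d` (arbitrary values beyond `ℓ`). -/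
def extOff {P : Type*} (d ℓ : ℕ) (B : Fin (ℓ + 1) → P) : Fin d → P :=
  fun j => if h : (j : ℕ) ≤ ℓ then B ⟨j, Nat.lt_succ_of_le h⟩ else B ⟨0, Nat.succ_pos ℓ⟩

lemma chain_congr (Wd Ht kw kh c n d : ℕ) (hd : 0 < d)
    (A A' : Fin d → Fin kw × Fin kh)
    (θ : Param (Fin Wd × Fin Ht × Fin n) kw kh c n d → ℝ) (xvec : Fin c → ℝ) :
    ∀ t, (∀ j : Fin d, (j : ℕ) ≤ t → A j = A' j) →
      chain Wd Ht kw kh c n d hd A θ xvec t = chain Wd Ht kw kh c n d hd A' θ xvec t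
  | 0, h => by
      funext i
      simp only [chain]
      rw [h ⟨0, hd⟩ (Nat.zero_le _)]
  | t + 1, h => by
      funext i
      simp only [chain]
      rw [chain_congr Wd Ht kw kh c n d hd A A' θ xvec t
        (fun j hj => h j (le_trans hj (Nat.le_succ t)))]
      refine Finset.sum_congr rfl fun j _ => ?_
      split
      · next ht =>
          rw [h ⟨t + 1, by omega⟩ le_rfl]
      · rfl

lemma sqrt_pow_eq (x : ℝ) (hx : 0 ≤ x) : ∀ m : ℕ, Real.sqrt x ^ m = Real.sqrt (x ^ m)
  | 0 => by simp
  | m + 1 => by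
      rw [pow_succ, pow_succ, Real.sqrt_mul (pow_nonneg hx m), sqrt_pow_eq x hx m]

lemma acts_eq (Wd Ht kw kh c n d : ℕ) [NeZero Wd] [NeZero Ht] (hd : 0 < d)
    (θ : Param (Fin Wd × Fin Ht × Fin n) kw kh c n d → ℝ)
    (x : Fin Wd → Fin Ht → Fin c → ℝ) :
    ∀ ℓ, ℓ < d → ∀ r s i,
      acts Wd Ht kw kh c n d θ x ℓ r s i =
        ((Real.sqrt ((kw : ℝ) * (kh : ℝ) * (n : ℝ)))⁻¹) ^ ℓ *
          (Real.sqrt ((kw : ℝ) * (kh : ℝ) * (c : ℝ)))⁻¹ *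
          ∑ B : Fin (ℓ + 1) → Fin kw × Fin kh,
            chain Wd Ht kw kh c n d hd (extOff d ℓ B) θ
              (fun j => x (r + ∑ t : Fin (ℓ + 1), ((((B t).1 : ℕ) + 1 : ℕ) : Fin Wd))
                          (s + ∑ t : Fin (ℓ + 1), ((((B t).2 : ℕ) + 1 : ℕ) : Fin Ht)) j)
              ℓ i
  | 0, hℓ, r, s, i => by
      simp only [acts, pow_zero, one_mul]
      congr 1
      rw [← (Equiv.funUnique (Fin 1) (Fin kw × Fin kh)).symm.sum_comp]
      rw [Fintype.sum_prod_type]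
      refine Finset.sum_congr rfl fun a _ => ?_
      refine Finset.sum_congr rfl fun b _ => ?_
      simp only [chain, Equiv.funUnique, Equiv.coe_fn_symm_mk, extOff]
      refine Finset.sum_congr rfl fun j _ => ?_
      norm_num
  | ℓ + 1, hℓ, r, s, i => by
      have hℓd : ℓ < d := by omega
      have hℓd1 : ℓ < d - 1 := by omega
      simp only [acts]
      -- rewrite using the IH
      have IH := acts_eq Wd Ht kw kh c n d hd θ x ℓ hℓd
      -- RHS: split the sum over `Fin (ℓ+2) → P` as last coordinate × rest
      rw [← (Fin.snocEquiv (fun _ : Fin (ℓ + 1 + 1) => Fin kw × Fin kh)).sum_comp]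
      rw [Fintype.sum_prod_type]
      rw [Fintype.sum_prod_type]
      -- massage each term
      have key : ∀ (a : Fin kw) (b : Fin kh),
          (∑ B : Fin (ℓ + 1) → Fin kw × Fin kh,
            chain Wd Ht kw kh c n d hd
              (extOff d (ℓ + 1) ((Fin.snocEquiv (fun _ => Fin kw × Fin kh)) ((a, b), B))) θ
              (fun j => x
                (r + ∑ t : Fin (ℓ + 1 + 1),
                    ((((((Fin.snocEquiv (fun _ => Fin kw × Fin kh)) ((a, b), B)) t).1 : ℕ) + 1 : ℕ) : Fin Wd))
                (s + ∑ t : Fin (ℓ + 1 + 1),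
                    ((((((Fin.snocEquiv (fun _ => Fin kw × Fin kh)) ((a, b), B)) t).2 : ℕ) + 1 : ℕ) : Fin Ht)) j)
              (ℓ + 1) i)
          = ∑ B : Fin (ℓ + 1) → Fin kw × Fin kh, ∑ j : Fin n,
              θ (.inr (.inr (⟨ℓ, hℓd1⟩, a, b, i, j))) *
              chain Wd Ht kw kh c n d hd (extOff d ℓ B) θ
                (fun j' => x ((r + (((a : ℕ) + 1 : ℕ) : Fin Wd)) +
                      ∑ t : Fin (ℓ + 1), ((((B t).1 : ℕ) + 1 : ℕ) : Fin Wd))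
                    ((s + (((b : ℕ) + 1 : ℕ) : Fin Ht)) +
                      ∑ t : Fin (ℓ + 1), ((((B t).2 : ℕ) + 1 : ℕ) : Fin Ht)) j')
                ℓ j := by
        intro a b
        refine Finset.sum_congr rfl fun B _ => ?_
        have hsnoc : ∀ t : Fin (ℓ + 1),
            (Fin.snocEquiv (fun _ : Fin (ℓ + 1 + 1) => Fin kw × Fin kh)) ((a, b), B) t.castSucc
              = B t := by
          intro t
          simp [Fin.snocEquiv, Fin.snoc_castSucc]
        have hlast :
            (Fin.snocEquiv (fun _ : Fin (ℓ + 1 + 1) => Fin kw × Fin kh)) ((a, b), B)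
              (Fin.last (ℓ + 1)) = (a, b) := by
          simp [Fin.snocEquiv]
        have hshift1 :
            (∑ t : Fin (ℓ + 1 + 1),
              ((((((Fin.snocEquiv (fun _ => Fin kw × Fin kh)) ((a, b), B)) t).1 : ℕ) + 1 : ℕ) : Fin Wd))
            = (((a : ℕ) + 1 : ℕ) : Fin Wd) +
              ∑ t : Fin (ℓ + 1), ((((B t).1 : ℕ) + 1 : ℕ) : Fin Wd) := by
          rw [Fin.sum_univ_castSucc]
          simp only [hsnoc, hlast]
          exact add_comm _ _
        have hshift2 :
            (∑ t : Fin (ℓ + 1 + 1),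
              ((((((Fin.snocEquiv (fun _ => Fin kw × Fin kh)) ((a, b), B)) t).2 : ℕ) + 1 : ℕ) : Fin Ht))
            = (((b : ℕ) + 1 : ℕ) : Fin Ht) +
              ∑ t : Fin (ℓ + 1), ((((B t).2 : ℕ) + 1 : ℕ) : Fin Ht) := by
          rw [Fin.sum_univ_castSucc]
          simp only [hsnoc, hlast]
          exact add_comm _ _
        have hx1 : r + (∑ t : Fin (ℓ + 1 + 1),
              ((((((Fin.snocEquiv (fun _ => Fin kw × Fin kh)) ((a, b), B)) t).1 : ℕ) + 1 : ℕ) : Fin Wd))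
            = (r + (((a : ℕ) + 1 : ℕ) : Fin Wd)) +
              ∑ t : Fin (ℓ + 1), ((((B t).1 : ℕ) + 1 : ℕ) : Fin Wd) := by
          rw [hshift1, add_assoc]
        have hx2 : s + (∑ t : Fin (ℓ + 1 + 1),
              ((((((Fin.snocEquiv (fun _ => Fin kw × Fin kh)) ((a, b), B)) t).2 : ℕ) + 1 : ℕ) : Fin Ht))
            = (s + (((b : ℕ) + 1 : ℕ) : Fin Ht)) +
              ∑ t : Fin (ℓ + 1), ((((B t).2 : ℕ) + 1 : ℕ) : Fin Ht) := by
          rw [hshift2, add_assoc]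
        simp only [chain, hx1, hx2]
        have hAeq : ∀ j : Fin d, (j : ℕ) ≤ ℓ →
            extOff d (ℓ + 1) ((Fin.snocEquiv (fun _ : Fin (ℓ + 1 + 1) => Fin kw × Fin kh)) ((a, b), B)) j
              = extOff d ℓ B j := by
          intro j hj
          have hj1 : (j : ℕ) ≤ ℓ + 1 := by omega
          simp only [extOff, dif_pos hj, dif_pos hj1]
          have : (⟨(j : ℕ), Nat.lt_succ_of_le hj1⟩ : Fin (ℓ + 1 + 1))
              = Fin.castSucc ⟨(j : ℕ), Nat.lt_succ_of_le hj⟩ := rfl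
          rw [this, hsnoc]
        rw [chain_congr Wd Ht kw kh c n d hd _ _ θ _ ℓ hAeq]
        refine Finset.sum_congr rfl fun j _ => ?_
        congr 2
        · rw [dif_pos hℓd1]
          have hA : extOff d (ℓ + 1)
              ((Fin.snocEquiv (fun _ : Fin (ℓ + 1 + 1) => Fin kw × Fin kh)) ((a, b), B))
              ⟨ℓ + 1, by omega⟩ = (a, b) := by
            simp only [extOff, dif_pos (le_refl (ℓ + 1))]
            have : (⟨ℓ + 1, Nat.lt_succ_of_le (le_refl (ℓ + 1))⟩ : Fin (ℓ + 1 + 1))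
                = Fin.last (ℓ + 1) := rfl
            rw [this, hlast]
          rw [hA]
      simp only [key]
      -- now both sides are elementary rearrangements
      simp only [dif_pos hℓd1, IH]
      rw [pow_succ]
      simp only [Finset.mul_sum]
      refine Finset.sum_congr rfl fun a _ => ?_
      refine Finset.sum_congr rfl fun b _ => ?_
      rw [Finset.sum_comm]
      refine Finset.sum_congr rfl fun B _ => ?_
      refine Finset.sum_congr rfl fun j _ => ?_
      ring


lemma sum_comm4 {ι1 ι2 ι3 ι4 M : Type*} [Fintype ι1] [Fintype ι2] [Fintype ι3] [Fintype ι4]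
    [AddCommMonoid M] (f : ι1 → ι2 → ι3 → ι4 → M) :
    (∑ a : ι1, ∑ b : ι2, ∑ c : ι3, ∑ d : ι4, f a b c d)
      = ∑ d : ι4, ∑ a : ι1, ∑ b : ι2, ∑ c : ι3, f a b c d := by
  trans (∑ a : ι1, ∑ d : ι4, ∑ b : ι2, ∑ c : ι3, f a b c d)
  · refine Finset.sum_congr rfl fun a _ => ?_
    trans (∑ b : ι2, ∑ d : ι4, ∑ c : ι3, f a b c d)
    · exact Finset.sum_congr rfl fun b _ => Finset.sum_comm
    · exact Finset.sum_comm
  · exact Finset.sum_comm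

/-- a deep linear CNN of depth `d` with `n` channels and Flatten readout
decomposes as `f(x) = (kw kh)^{-d/2} Σ_{(a₁,b₁),…,(a_d,b_d)} f_{(a₁,b₁),…,(a_d,b_d)}(x)`,
the sum running over all `d`-tuples of filter offsets, where each summand is the deep
linear fully-connected-type map using one filter slice per layer. -/
theorem deep_linear_cnn_decomposition (Wd Ht kw kh c n d : ℕ)
    [NeZero Wd] [NeZero Ht] (hkw : 0 < kw) (hkh : 0 < kh) (hc : 0 < c)
    (hd : 0 < d) (hn : 1 ≤ n)
    (θ : Param (Fin Wd × Fin Ht × Fin n) kw kh c n d → ℝ)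
    (x : Fin Wd → Fin Ht → Fin c → ℝ) :
    netFlatten Wd Ht kw kh c n d θ x
      = (Real.sqrt (((kw : ℝ) * (kh : ℝ)) ^ d))⁻¹ *
        ∑ A : Fin d → Fin kw × Fin kh, summand Wd Ht kw kh c n d hd A θ x := by
  classical
  have hdd : d - 1 + 1 = d := Nat.succ_pred_eq_of_pos hd
  have hl : d - 1 < d := by omega
  unfold netFlatten summand
  simp only [acts_eq Wd Ht kw kh c n d hd θ x (d - 1) hl]
  have const_eq :
      (Real.sqrt ((Wd : ℝ) * (Ht : ℝ) * (n : ℝ)))⁻¹ *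
        (((Real.sqrt ((kw : ℝ) * (kh : ℝ) * (n : ℝ)))⁻¹) ^ (d - 1) *
          (Real.sqrt ((kw : ℝ) * (kh : ℝ) * (c : ℝ)))⁻¹)
      = (Real.sqrt (((kw : ℝ) * (kh : ℝ)) ^ d))⁻¹ *
        ((Real.sqrt ((Wd : ℝ) * (Ht : ℝ) * (n : ℝ)))⁻¹ *
          (Real.sqrt ((n : ℝ) ^ (d - 1) * (c : ℝ)))⁻¹) := by
    have h1 : ((Real.sqrt ((kw : ℝ) * (kh : ℝ) * (n : ℝ)))⁻¹) ^ (d - 1) *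
        (Real.sqrt ((kw : ℝ) * (kh : ℝ) * (c : ℝ)))⁻¹
        = (Real.sqrt (((kw : ℝ) * (kh : ℝ)) ^ d))⁻¹ *
          (Real.sqrt ((n : ℝ) ^ (d - 1) * (c : ℝ)))⁻¹ := by
      rw [inv_pow, ← mul_inv, ← mul_inv]
      congr 1
      rw [sqrt_pow_eq _ (by positivity), ← Real.sqrt_mul (by positivity),
        ← Real.sqrt_mul (by positivity)]
      congr 1
      generalize hm : d - 1 = m
      obtain rfl : d = m + 1 := by omega
      rw [pow_succ]
      ring
    rw [h1]; ring
  have reindex : ∀ r s i,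
      (∑ B : Fin (d - 1 + 1) → Fin kw × Fin kh,
        chain Wd Ht kw kh c n d hd (extOff d (d - 1) B) θ
          (fun j => x (r + ∑ t : Fin (d - 1 + 1), ((((B t).1 : ℕ) + 1 : ℕ) : Fin Wd))
                      (s + ∑ t : Fin (d - 1 + 1), ((((B t).2 : ℕ) + 1 : ℕ) : Fin Ht)) j)
          (d - 1) i)
      = ∑ A : Fin d → Fin kw × Fin kh,
          chain Wd Ht kw kh c n d hd A θ
            (fun j => x (r + ∑ t : Fin d, ((((A t).1 : ℕ) + 1 : ℕ) : Fin Wd))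
                        (s + ∑ t : Fin d, ((((A t).2 : ℕ) + 1 : ℕ) : Fin Ht)) j)
            (d - 1) i := by
    intro r s i
    refine Fintype.sum_equiv (Equiv.arrowCongr (finCongr hdd) (Equiv.refl _)) _ _ fun B => ?_
    set eB := (Equiv.arrowCongr (finCongr hdd) (Equiv.refl (Fin kw × Fin kh))) B with heB
    have hext : extOff d (d - 1) B = eB := by
      funext j
      have hj : (j : ℕ) ≤ d - 1 := by omega
      simp only [extOff, dif_pos hj]
      rfl
    have hsh1 : (∑ t : Fin (d - 1 + 1), ((((B t).1 : ℕ) + 1 : ℕ) : Fin Wd))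
        = ∑ t : Fin d, ((((eB t).1 : ℕ) + 1 : ℕ) : Fin Wd) := by
      refine Fintype.sum_equiv (finCongr hdd) _ _ fun t => ?_
      rfl
    have hsh2 : (∑ t : Fin (d - 1 + 1), ((((B t).2 : ℕ) + 1 : ℕ) : Fin Ht))
        = ∑ t : Fin d, ((((eB t).2 : ℕ) + 1 : ℕ) : Fin Ht) := by
      refine Fintype.sum_equiv (finCongr hdd) _ _ fun t => ?_
      rfl
    rw [hext, hsh1, hsh2]
  simp only [reindex]
  simp only [Finset.mul_sum]
  rw [sum_comm4]
  refine Finset.sum_congr rfl fun A _ => ?_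
  refine Finset.sum_congr rfl fun r _ => ?_
  refine Finset.sum_congr rfl fun s _ => ?_
  refine Finset.sum_congr rfl fun i _ => ?_
  linear_combination (θ (Sum.inl (r, s, i)) *
    chain Wd Ht kw kh c n d hd A θ
      (fun j => x (r + ∑ t : Fin d, ((((A t).1 : ℕ) + 1 : ℕ) : Fin Wd))
                  (s + ∑ t : Fin d, ((((A t).2 : ℕ) + 1 : ℕ) : Fin Ht)) j)
      (d - 1) i) * const_eq

end DeepLinearCNN
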